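/- Let F be a number field of degree n, p an odd prime totally ramified in F with unique prime 𝔭 above p, and suppose gcd(n, (p-1)/2) = 1. Then every unit λ ∈ O_F^× satisfies λ ≡ 1 (mod 𝔭) or λ ≡ -1 (mod 𝔭). -/

import Mathlib

open NumberField

set_option synthInstance.maxHeartbeats 1000000 in
set_option maxHeartbeats 1000000 in
/-- Let `F` be a number field of degree `n`, `p` an odd prime totally
ramified in `F` with unique prime `𝔭` above `p`, and `gcd(n, (p-1)/2) = 1`. Then every
unit `λ` of `𝓞 F` satisfies `λ ≡ 1 (mod 𝔭)` or `λ ≡ -1 (mod 𝔭)`. -/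
theorem unit_congr_pm_one_mod_frakp
    (F : Type*) [Field F] [NumberField F] (n : ℕ) (hn : Module.finrank ℚ F = n)
    (p : ℕ) (hp : p.Prime) (hodd : Odd p)
    (𝔭 : Ideal (𝓞 F)) (h𝔭 : 𝔭.IsPrime)
    (hram : Ideal.span {(p : 𝓞 F)} = 𝔭 ^ n)
    (hgcd : Nat.gcd n ((p - 1) / 2) = 1)
    (lam : (𝓞 F)ˣ) :
    (lam : 𝓞 F) - 1 ∈ 𝔭 ∨ (lam : 𝓞 F) + 1 ∈ 𝔭 := by
  haveI : Fact p.Prime := ⟨hp⟩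
  have hn0 : 0 < n := hn ▸ Module.finrank_pos
  have hrank : Module.finrank ℤ (𝓞 F) = n := (RingOfIntegers.rank F).trans hn
  set ι := Module.Free.ChooseBasisIndex ℤ (𝓞 F) with hι
  let b : Module.Basis ι ℤ (𝓞 F) := Module.Free.chooseBasis ℤ (𝓞 F)
  have hcardι : Fintype.card ι = n := by
    rw [← hrank, Module.finrank_eq_card_chooseBasisIndex]
  haveI : Nonempty ι := Fintype.card_pos_iff.mp (by rw [hcardι]; exact hn0)
  -- p ∈ 𝔭
  have hp𝔭 : ((p : ℕ) : 𝓞 F) ∈ 𝔭 := by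
    have h1 : ((p : ℕ) : 𝓞 F) ∈ Ideal.span {((p : ℕ) : 𝓞 F)} := Ideal.mem_span_singleton_self _
    rw [hram] at h1
    exact Ideal.pow_le_self hn0.ne' h1
  -- absolute norm of 𝔭 is p
  have habs : Ideal.absNorm 𝔭 = p := by
    have h1 : Ideal.absNorm (Ideal.span {((p:ℕ) : 𝓞 F)}) = p ^ n := by
      rw [Ideal.absNorm_span_singleton,
        show ((p:ℕ) : 𝓞 F) = algebraMap ℤ (𝓞 F) (p : ℤ) by push_cast; rfl,
        Algebra.norm_algebraMap_of_basis b, hcardι]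
      rw [Int.natAbs_pow]
      simp
    rw [hram, map_pow] at h1
    exact Nat.pow_left_injective hn0.ne' h1
  -- the residue field is ℤ/p
  have hcardQ : Nat.card (𝓞 F ⧸ 𝔭) = p := by
    rw [← Submodule.cardQuot_apply, ← Ideal.absNorm_apply, habs]
  haveI : Finite (𝓞 F ⧸ 𝔭) := Nat.finite_of_card_ne_zero (by rw [hcardQ]; exact hp.pos.ne')
  haveI : Fintype (𝓞 F ⧸ 𝔭) := Fintype.ofFinite _
  have hcardQ' : Fintype.card (𝓞 F ⧸ 𝔭) = p := by rw [← Nat.card_eq_fintype_card, hcardQ]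
  haveI : Nontrivial (𝓞 F ⧸ 𝔭) := Fintype.one_lt_card_iff_nontrivial.mp (by rw [hcardQ']; exact hp.one_lt)
  haveI : CharP (𝓞 F ⧸ 𝔭) p := charP_of_card_eq_prime hcardQ'
  -- find an integer a congruent to lam mod 𝔭
  obtain ⟨z, hz⟩ := (ZMod.castHom_bijective (𝓞 F ⧸ 𝔭) hcardQ').2 (Ideal.Quotient.mk 𝔭 (lam : 𝓞 F))
  obtain ⟨a, rfl⟩ := ZMod.intCast_surjective z
  have ha : (lam : 𝓞 F) - (a : 𝓞 F) ∈ 𝔭 := by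
    rw [map_intCast] at hz
    have : Ideal.Quotient.mk 𝔭 (lam : 𝓞 F) = Ideal.Quotient.mk 𝔭 ((a : ℤ) : 𝓞 F) := by
      rw [← hz, map_intCast]
    exact (Ideal.Quotient.eq).mp this
  -- matrices
  let f : Matrix ι ι ℤ →+* Matrix ι ι (ZMod p) := (Int.castRingHom (ZMod p)).mapMatrix
  let M : Matrix ι ι ℤ := Algebra.leftMulMatrix b (lam : 𝓞 F)
  let N : Matrix ι ι (ZMod p) := f (Algebra.leftMulMatrix b ((lam : 𝓞 F) - ((a : ℤ) : 𝓞 F)))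
  have hA : f M = ((a : ℤ) : Matrix ι ι (ZMod p)) + N := by
    show f (Algebra.leftMulMatrix b (lam : 𝓞 F)) = _
    rw [show (lam : 𝓞 F) = ((a : ℤ) : 𝓞 F) + ((lam : 𝓞 F) - ((a : ℤ) : 𝓞 F)) by ring,
      map_add, map_add, map_intCast, map_intCast]
  have hNn : N ^ n = 0 := by
    have h1 : ((lam : 𝓞 F) - ((a : ℤ) : 𝓞 F)) ^ n ∈ Ideal.span {((p : ℕ) : 𝓞 F)} := by
      rw [hram]; exact Ideal.pow_mem_pow ha n
    obtain ⟨μ, hμ⟩ := Ideal.mem_span_singleton'.mp h1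
    show (f (Algebra.leftMulMatrix b _)) ^ n = 0
    rw [← map_pow, ← map_pow, ← hμ, map_mul, map_mul, map_natCast, map_natCast,
      CharP.cast_eq_zero, mul_zero]
  have hNpn : N ^ (p ^ n) = 0 := by
    have hk : n ≤ p ^ n := (Nat.lt_pow_self (n := n) hp.one_lt).le
    rw [← Nat.sub_add_cancel hk, pow_add, hNn, mul_zero]
  have hdet : ((Algebra.norm ℤ (lam : 𝓞 F) : ℤ) : ZMod p) = ((a : ℤ) : ZMod p) ^ n := by
    have hcomm : Commute (((a : ℤ)) : Matrix ι ι (ZMod p)) N := Int.cast_commute _ _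
    have hfrob : (f M) ^ (p ^ n) = ((a ^ (p ^ n) : ℤ) : Matrix ι ι (ZMod p)) := by
      rw [hA, add_pow_char_pow_of_commute _ _ hcomm, hNpn, add_zero, Int.cast_pow]
    have hdetfM : (f M).det = ((Algebra.norm ℤ (lam : 𝓞 F) : ℤ) : ZMod p) := by
      show ((Int.castRingHom (ZMod p)).mapMatrix M).det = _
      rw [← RingHom.map_det, Algebra.norm_eq_matrix_det b]
      rfl
    have h2 := congrArg Matrix.det hfrob
    rw [Matrix.det_pow, hdetfM, ← Matrix.diagonal_intCast, Matrix.det_diagonal,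
      Finset.prod_const, Finset.card_univ, hcardι] at h2
    rw [← ZMod.pow_card_pow (n := n) (((Algebra.norm ℤ (lam : 𝓞 F) : ℤ) : ZMod p)), h2,
      Int.cast_pow, ← pow_mul, mul_comm, pow_mul, ZMod.pow_card_pow]
  -- the norm of a unit is ±1
  have hunit : IsUnit (Algebra.norm ℤ (lam : 𝓞 F)) := lam.isUnit.map (Algebra.norm ℤ)
  set x : ZMod p := ((a : ℤ) : ZMod p) with hx
  have hxn : x ^ n = 1 ∨ x ^ n = -1 := by
    rcases Int.isUnit_iff.mp hunit with h | h <;> [left; right] <;>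
      rw [← hdet, h] <;> simp
  have hx0 : x ≠ 0 := by
    intro h0
    rcases hxn with h | h <;> rw [h0, zero_pow hn0.ne'] at h
    · exact zero_ne_one h
    · exact (neg_ne_zero.mpr one_ne_zero) h.symm
  have h2n : x ^ (2 * n) = 1 := by
    rcases hxn with h | h <;> rw [mul_comm, pow_mul, h] <;> ring
  have hp1 : x ^ (p - 1) = 1 := ZMod.pow_card_sub_one_eq_one hx0
  have hgcd2 : Nat.gcd (2 * n) (p - 1) = 2 := by
    have h2 : 2 ∣ p - 1 := by
      obtain ⟨k, hk⟩ := hodd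
      omega
    obtain ⟨m, hm⟩ := h2
    have : Nat.gcd n m = 1 := by
      have : m = (p - 1) / 2 := by omega
      rw [this]; exact hgcd
    rw [hm, Nat.gcd_mul_left, this, mul_one]
  have hx2 : x * x = 1 := by
    have := (pow_gcd_eq_one (a := x)).mpr ⟨h2n, hp1⟩
    rw [hgcd2, pow_two] at this  -- pow_two? sq
    exact this
  have hpm : x = 1 ∨ x = -1 := mul_self_eq_one_iff.mp hx2
  rcases hpm with h | h
  · left
    have hdvd : (p : ℤ) ∣ a - 1 := by
      rw [← ZMod.intCast_zmod_eq_zero_iff_dvd]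
      push_cast
      rw [← hx, h]; ring
    obtain ⟨t, ht⟩ := hdvd
    have : (lam : 𝓞 F) - 1 = ((lam : 𝓞 F) - ((a : ℤ) : 𝓞 F)) + (((p : ℕ) : 𝓞 F) * (t : 𝓞 F)) := by
      have : ((a - 1 : ℤ) : 𝓞 F) = ((p * t : ℤ) : 𝓞 F) := congrArg (fun z : ℤ => (z : 𝓞 F)) ht
      push_cast at this ⊢
      linear_combination this
    rw [this]
    exact Ideal.add_mem 𝔭 ha (Ideal.mul_mem_right _ 𝔭 hp𝔭)
  · right
    have hdvd : (p : ℤ) ∣ a + 1 := by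
      rw [← ZMod.intCast_zmod_eq_zero_iff_dvd]
      push_cast
      rw [← hx, h]; ring
    obtain ⟨t, ht⟩ := hdvd
    have : (lam : 𝓞 F) + 1 = ((lam : 𝓞 F) - ((a : ℤ) : 𝓞 F)) + (((p : ℕ) : 𝓞 F) * (t : 𝓞 F)) := by
      have : ((a + 1 : ℤ) : 𝓞 F) = ((p * t : ℤ) : 𝓞 F) := congrArg (fun z : ℤ => (z : 𝓞 F)) ht
      push_cast at this ⊢
      linear_combination this
    rw [this]
    exact Ideal.add_mem 𝔭 ha (Ideal.mul_mem_right _ 𝔭 hp𝔭)
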